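/- Let d ∈ ℕ, Φ = (φ₀,…,φ_d) ∈ ℝ^{d+1} and s ∈ {0,1}^d, with d₁ the Hamming weight of s and d₂ = d − d₁, and assume d₁ ≥ 1 and d₂ ≥ 1. Let P and Q be the (1,1) and (1,2) entries of the M-QSP unitary M_{Φ,s}, and suppose c_{jk} and c̃_{jk} (j ∈ [−d₁,d₁], k ∈ [−d₂,d₂], complex) satisfy P(x₁,x₂) = Σ_{j,k} c_{jk} e^{ijx₁} e^{ikx₂} and Q(x₁,x₂) = Σ_{j,k} c̃_{jk} e^{ijx₁} e^{ikx₂} for all x₁, x₂ ∈ ℝ. Then at least one of the following holds: there exists φ ∈ ℝ such that c_{d₁,k} = e^{2iφ} c̃_{d₁,k} for every k ∈ [−d₂,d₂]; or there exists φ′ ∈ ℝ such that c_{j,d₂} = e^{2iφ′} c̃_{j,d₂} for every j ∈ [−d₁,d₁]. -/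

import Mathlib

/-!
STATEMENT 6 (M-QSP: condition (v) on the highest-degree coefficients).
-/

open Complex Matrix
open scoped Matrix

noncomputable def Wgate (x : ℝ) : Matrix (Fin 2) (Fin 2) ℂ :=
  !![(Real.cos x : ℂ), (Real.sin x : ℂ) * Complex.I;
     (Real.sin x : ℂ) * Complex.I, (Real.cos x : ℂ)]

noncomputable def Zgate (φ : ℝ) : Matrix (Fin 2) (Fin 2) ℂ :=
  !![Complex.exp ((φ : ℂ) * Complex.I), 0;
     0, Complex.exp (-(φ : ℂ) * Complex.I)]

/-- The M-QSP unitary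
`M_{Φ,s}(x₁,x₂) = Z(φ₀)·∏_{k=1}^d (W(x₁)^{s_k}·W(x₂)^{1-s_k}·Z(φ_k))`,
where each `s k ∈ {0,1}`. -/
noncomputable def Mmqsp (d : ℕ) (Φ : Fin (d + 1) → ℝ) (s : Fin d → ℕ)
    (x₁ x₂ : ℝ) : Matrix (Fin 2) (Fin 2) ℂ :=
  Zgate (Φ 0) *
    (List.ofFn (fun k : Fin d =>
      Wgate x₁ ^ (s k) * Wgate x₂ ^ (1 - s k) * Zgate (Φ k.succ))).prod


noncomputable def ec (j : ℤ) (x : ℝ) : ℂ := Complex.exp (Complex.I * (j : ℂ) * (x : ℂ))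

lemma ec_add (j t : ℤ) (x : ℝ) : ec (j + t) x = ec j x * ec t x := by
  rw [ec, ec, ec, ← Complex.exp_add]; congr 1; push_cast; ring

lemma ec_zero (x : ℝ) : ec 0 x = 1 := by simp [ec]

/-- Linear independence of characters on finite integer support. -/
lemma exp_sum_eq_zero (S : Finset ℤ) (a : ℤ → ℂ)
    (h : ∀ x : ℝ, ∑ j ∈ S, a j * ec j x = 0) :
    ∀ j ∈ S, a j = 0 := by
  intro j₀ hj₀
  set N : ℕ := S.sup fun j => j.natAbs with hN
  have hbd : ∀ j ∈ S, 0 ≤ j + (N : ℤ) := by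
    intro j hj
    have h1 : j.natAbs ≤ N := Finset.le_sup (f := fun j : ℤ => j.natAbs) hj
    omega
  set p : Polynomial ℂ := ∑ j ∈ S, Polynomial.C (a j) * Polynomial.X ^ (j + (N : ℤ)).toNat with hp
  have hroot : ∀ x : ℝ, p.IsRoot (Complex.exp (Complex.I * x)) := by
    intro x
    have key : ∀ j ∈ S, a j * Complex.exp (Complex.I * x) ^ (j + (N : ℤ)).toNat
        = (a j * ec j x) * ec N x := by
      intro j hj
      have h1 : Complex.exp (Complex.I * x) ^ (j + (N : ℤ)).toNat
          = Complex.exp ((((j + (N : ℤ)).toNat : ℕ) : ℂ) * (Complex.I * x)) := by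
        rw [Complex.exp_nat_mul]
      have h2 : (((j + (N : ℤ)).toNat : ℕ) : ℂ) = (j : ℂ) + (N : ℂ) := by
        have h3 := Int.toNat_of_nonneg (hbd j hj)
        have h4 : (((j + (N : ℤ)).toNat : ℤ) : ℂ) = ((j + (N:ℤ) : ℤ) : ℂ) := by rw [h3]
        push_cast at h4 ⊢
        linear_combination h4
      rw [h1, h2, ec, ec, mul_assoc, ← Complex.exp_add]
      congr 2
      push_cast
      ring
    have : p.eval (Complex.exp (Complex.I * x))
        = (∑ j ∈ S, a j * ec j x) * ec N x := by
      rw [hp, Polynomial.eval_finset_sum, Finset.sum_mul]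
      exact Finset.sum_congr rfl fun j hj => by
        rw [Polynomial.eval_mul, Polynomial.eval_C, Polynomial.eval_pow, Polynomial.eval_X]
        exact key j hj
    rw [Polynomial.IsRoot, this, h x, zero_mul]
  have hpz : p = 0 := by
    apply Polynomial.eq_zero_of_infinite_isRoot
    have hsub : (fun x : ℝ => Complex.exp (Complex.I * x)) '' Set.Ioo 0 1 ⊆
        {z | p.IsRoot z} := by
      rintro z ⟨x, _, rfl⟩
      exact hroot x
    have hinj : Set.InjOn (fun x : ℝ => Complex.exp (Complex.I * x)) (Set.Ioo 0 1) := by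
      intro x hx y hy hxy
      simp only at hxy
      rw [Complex.exp_eq_exp_iff_exists_int] at hxy
      obtain ⟨n, hn⟩ := hxy
      have hn' : (x:ℂ) * Complex.I = ((y + n*(2*Real.pi) : ℝ):ℂ) * Complex.I := by
        push_cast
        linear_combination hn
      have hx2 : (x:ℂ) = ((y + n*(2*Real.pi) : ℝ):ℂ) := mul_right_cancel₀ Complex.I_ne_zero hn'
      have him : x = y + n*(2*Real.pi) := by exact_mod_cast hx2
      have hx' : x ∈ Set.Ioo (0:ℝ) 1 := hx
      have hy' : y ∈ Set.Ioo (0:ℝ) 1 := hy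
      have hpi : (3:ℝ) < Real.pi := Real.pi_gt_three
      rcases lt_trichotomy n 0 with hn0 | hn0 | hn0
      · have hn1 : n ≤ -1 := by omega
        have : (n:ℝ) ≤ -1 := by exact_mod_cast hn1
        nlinarith [hx'.1, hx'.2, hy'.1, hy'.2]
      · simp [hn0] at him; linarith [him]
      · have hn1 : 1 ≤ n := by omega
        have : (1:ℝ) ≤ (n:ℝ) := by exact_mod_cast hn1
        nlinarith [hx'.1, hx'.2, hy'.1, hy'.2]
    exact Set.Infinite.mono hsub (Set.Infinite.image hinj (Set.Ioo_infinite (by norm_num)))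
  have hcoeff := congrArg (fun q => Polynomial.coeff q ((j₀ + (N : ℤ)).toNat)) hpz
  simp only [hp, Polynomial.finset_sum_coeff, Polynomial.coeff_C_mul, Polynomial.coeff_X_pow,
    Polynomial.coeff_zero] at hcoeff
  rw [Finset.sum_eq_single j₀] at hcoeff
  · simpa using hcoeff
  · intro j hj hne
    have hne2 : (j + (N:ℤ)).toNat ≠ (j₀ + (N:ℤ)).toNat := by
      have h1 := hbd j hj
      have h2 := hbd j₀ hj₀
      omega
    rw [if_neg (Ne.symm hne2), mul_zero]
  · intro h; exact absurd hj₀ h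
/-- Trig polynomial of degree at most `m` (in one real variable). -/
def TP (m : ℤ) (f : ℝ → ℂ) : Prop :=
  ∃ a : ℤ → ℂ, (∀ j ∉ Finset.Icc (-m) m, a j = 0) ∧
    ∀ x, f x = ∑ j ∈ Finset.Icc (-m) m, a j * ec j x

lemma TP_const (z : ℂ) : TP 0 (fun _ => z) := by
  refine ⟨fun j => if j = 0 then z else 0, ?_, ?_⟩
  · intro j hj
    show (if j = 0 then z else 0) = 0
    rw [if_neg]
    intro hj0
    exact hj (by simp [hj0])
  · intro x
    show z = _
    simp [ec_zero]

lemma shift (m M t : ℤ) (h1 : -M ≤ t - m) (h2 : t + m ≤ M)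
    (b : ℤ → ℂ) (hb : ∀ j ∉ Finset.Icc (-m) m, b j = 0) (x : ℝ) :
    (∑ k ∈ Finset.Icc (-m) m, b k * ec k x) * ec t x
      = ∑ l ∈ Finset.Icc (-M) M, b (l - t) * ec l x := by
  have h3 : Finset.Icc (-m + t) (m + t) ⊆ Finset.Icc (-M) M := by
    intro l hl
    simp only [Finset.mem_Icc] at *
    omega
  rw [← Finset.sum_subset h3 (by
    intro l hl1 hl2
    rw [hb (l - t) (by simp only [Finset.mem_Icc] at *; omega), zero_mul])]
  rw [← Finset.map_add_right_Icc, Finset.sum_map, Finset.sum_mul]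
  apply Finset.sum_congr rfl
  intro k _
  simp only [addRightEmbedding_apply]
  rw [add_sub_cancel_right, ec_add, mul_assoc]

lemma TP_add (m : ℤ) (f g : ℝ → ℂ) (hf : TP m f) (hg : TP m g) :
    TP m (fun x => f x + g x) := by
  obtain ⟨a, ha0, ha⟩ := hf
  obtain ⟨b, hb0, hb⟩ := hg
  refine ⟨fun j => a j + b j,
    fun j hj => by show a j + b j = 0; rw [ha0 j hj, hb0 j hj, add_zero], fun x => ?_⟩
  show f x + g x = ∑ j ∈ Finset.Icc (-m) m, (a j + b j) * ec j x
  rw [ha, hb, ← Finset.sum_add_distrib]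
  exact Finset.sum_congr rfl fun j _ => by ring

lemma TP_mul (m₁ m₂ : ℤ) (hm₂ : 0 ≤ m₂) (f g : ℝ → ℂ)
    (hf : TP m₁ f) (hg : TP m₂ g) : TP (m₁ + m₂) (fun x => f x * g x) := by
  obtain ⟨a, ha0, ha⟩ := hf
  obtain ⟨b, hb0, hb⟩ := hg
  refine ⟨fun l => ∑ j ∈ Finset.Icc (-m₁) m₁, a j * b (l - j), ?_, ?_⟩
  · intro l hl
    apply Finset.sum_eq_zero
    intro j hj
    rw [hb0 (l - j) (by simp only [Finset.mem_Icc] at *; omega), mul_zero]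
  · intro x
    show f x * g x = ∑ l ∈ Finset.Icc (-(m₁+m₂)) (m₁+m₂),
      (∑ j ∈ Finset.Icc (-m₁) m₁, a j * b (l - j)) * ec l x
    rw [ha x, hb x, Finset.sum_mul]
    have step : ∀ j ∈ Finset.Icc (-m₁) m₁,
        (a j * ec j x) * (∑ k ∈ Finset.Icc (-m₂) m₂, b k * ec k x)
          = ∑ l ∈ Finset.Icc (-(m₁+m₂)) (m₁+m₂), a j * b (l - j) * ec l x := by
      intro j hj
      simp only [Finset.mem_Icc] at hj
      rw [show (a j * ec j x) * (∑ k ∈ Finset.Icc (-m₂) m₂, b k * ec k x)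
          = a j * ((∑ k ∈ Finset.Icc (-m₂) m₂, b k * ec k x) * ec j x) by ring]
      rw [shift m₂ (m₁+m₂) j (by omega) (by omega) b hb0 x, Finset.mul_sum]
      exact Finset.sum_congr rfl fun l _ => by ring
    rw [Finset.sum_congr rfl step, Finset.sum_comm]
    exact Finset.sum_congr rfl fun l _ => by rw [Finset.sum_mul]
lemma cos_eq_ec (x : ℝ) : (Real.cos x : ℂ) = (ec 1 x + ec (-1) x) / 2 := by
  have h1 : ec 1 x = Complex.cos x + Complex.sin x * Complex.I := by
    rw [ec]; push_cast
    rw [show Complex.I * 1 * (x:ℂ) = (x:ℂ) * Complex.I by ring, Complex.exp_mul_I]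
  have h2 : ec (-1) x = Complex.cos x - Complex.sin x * Complex.I := by
    rw [ec]; push_cast
    rw [show Complex.I * (-1) * (x:ℂ) = ((-x : ℂ)) * Complex.I by ring, Complex.exp_mul_I,
      Complex.cos_neg, Complex.sin_neg]
    ring
  rw [h1, h2, Complex.ofReal_cos]
  ring

lemma sinI_eq_ec (x : ℝ) : (Real.sin x : ℂ) * Complex.I = (ec 1 x - ec (-1) x) / 2 := by
  have h1 : ec 1 x = Complex.cos x + Complex.sin x * Complex.I := by
    rw [ec]; push_cast
    rw [show Complex.I * 1 * (x:ℂ) = (x:ℂ) * Complex.I by ring, Complex.exp_mul_I]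
  have h2 : ec (-1) x = Complex.cos x - Complex.sin x * Complex.I := by
    rw [ec]; push_cast
    rw [show Complex.I * (-1) * (x:ℂ) = ((-x : ℂ)) * Complex.I by ring, Complex.exp_mul_I,
      Complex.cos_neg, Complex.sin_neg]
    ring
  rw [h1, h2, Complex.ofReal_sin]
  ring

lemma Icc_neg_one_one : Finset.Icc (-1 : ℤ) 1 = {-1, 0, 1} := by decide

lemma TP1_of (u v : ℂ) (f : ℝ → ℂ) (hf : ∀ x, f x = u * ec 1 x + v * ec (-1) x) :
    TP 1 f := by
  refine ⟨fun j => if j = 1 then u else if j = -1 then v else 0, ?_, ?_⟩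
  · intro j hj
    simp only [Finset.mem_Icc] at hj
    show (if j = 1 then u else if j = -1 then v else 0) = 0
    rw [if_neg (by omega), if_neg (by omega)]
  · intro x
    rw [hf x, Icc_neg_one_one]
    simp [Finset.sum_insert, Finset.mem_insert]
    ring

lemma TP1_cos (z : ℂ) : TP 1 (fun x => (Real.cos x : ℂ) * z) := by
  apply TP1_of (z/2) (z/2)
  intro x
  rw [cos_eq_ec]
  ring

lemma TP1_sinI (z : ℂ) : TP 1 (fun x => (Real.sin x : ℂ) * Complex.I * z) := by
  apply TP1_of (z/2) (-z/2)
  intro x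
  rw [show (Real.sin x : ℂ) * Complex.I * z = ((Real.sin x : ℂ) * Complex.I) * z by ring,
    sinI_eq_ec]
  ring

lemma TP_matmul (m₁ m₂ : ℤ) (hm₂ : 0 ≤ m₂) (A B : ℝ → Matrix (Fin 2) (Fin 2) ℂ)
    (hA : ∀ i j, TP m₁ (fun x => A x i j)) (hB : ∀ i j, TP m₂ (fun x => B x i j)) :
    ∀ i j, TP (m₁ + m₂) (fun x => (A x * B x) i j) := by
  intro i j
  have hfun : (fun x => (A x * B x) i j)
      = fun x => (A x i 0 * B x 0 j) + (A x i 1 * B x 1 j) := by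
    funext x
    rw [Matrix.mul_apply, Fin.sum_univ_two]
  rw [hfun]
  exact TP_add _ _ _ (TP_mul _ _ hm₂ _ _ (hA i 0) (hB 0 j))
    (TP_mul _ _ hm₂ _ _ (hA i 1) (hB 1 j))

lemma TP_list_prod (l : List ((ℝ → Matrix (Fin 2) (Fin 2) ℂ) × ℕ))
    (h : ∀ p ∈ l, ∀ i j, TP (p.2 : ℤ) (fun x => p.1 x i j)) :
    ∀ i j, TP ((l.map Prod.snd).sum : ℤ) (fun x => (l.map (fun p => p.1 x)).prod i j) := by
  induction l with
  | nil =>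
    intro i j
    simp only [List.map_nil, List.sum_nil, List.prod_nil, Nat.cast_zero]
    have : (fun x : ℝ => (1 : Matrix (Fin 2) (Fin 2) ℂ) i j)
        = fun _ : ℝ => ((1 : Matrix (Fin 2) (Fin 2) ℂ) i j) := rfl
    rw [this]
    exact TP_const _
  | cons p l ih =>
    intro i j
    simp only [List.map_cons, List.sum_cons, List.prod_cons, Nat.cast_add]
    exact TP_matmul _ _ (by positivity) _ _
      (fun i j => h p List.mem_cons_self i j)
      (fun i j => ih (fun q hq => h q (List.mem_cons_of_mem p hq)) i j) i j

lemma expand_cos_sin (m : ℤ) (hm : 0 ≤ m) (a b : ℤ → ℂ)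
    (ha : ∀ j ∉ Finset.Icc (-m) m, a j = 0) (hb : ∀ j ∉ Finset.Icc (-m) m, b j = 0)
    (x : ℝ) :
    (∑ j ∈ Finset.Icc (-m) m, a j * ec j x) * (Real.cos x : ℂ)
      + (∑ j ∈ Finset.Icc (-m) m, b j * ec j x) * ((Real.sin x : ℂ) * Complex.I)
    = ∑ j ∈ Finset.Icc (-(m+1)) (m+1),
        ((a (j-1) + a (j+1) + b (j-1) - b (j+1)) / 2) * ec j x := by
  set A := ∑ j ∈ Finset.Icc (-m) m, a j * ec j x with hA
  set B := ∑ j ∈ Finset.Icc (-m) m, b j * ec j x with hB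
  have h1 := shift m (m+1) 1 (by omega) (by omega) a ha x
  have h2 := shift m (m+1) (-1) (by omega) (by omega) a ha x
  have h3 := shift m (m+1) 1 (by omega) (by omega) b hb x
  have h4 := shift m (m+1) (-1) (by omega) (by omega) b hb x
  rw [cos_eq_ec, sinI_eq_ec]
  rw [show A * ((ec 1 x + ec (-1) x) / 2) + B * ((ec 1 x - ec (-1) x) / 2)
      = (A * ec 1 x + A * ec (-1) x + (B * ec 1 x - B * ec (-1) x)) / 2 by ring]
  rw [← hA] at h1 h2
  rw [← hB] at h3 h4
  rw [h1, h2, h3, h4, ← Finset.sum_add_distrib, ← Finset.sum_sub_distrib,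
    ← Finset.sum_add_distrib, Finset.sum_div]
  apply Finset.sum_congr rfl
  intro j _
  have : j - -1 = j + 1 := by ring
  rw [this]
  ring
lemma WZ_eq (x φ : ℝ) : Wgate x * Zgate φ =
    !![(Real.cos x : ℂ) * Complex.exp ((φ:ℂ) * Complex.I),
       (Real.sin x : ℂ) * Complex.I * Complex.exp (-(φ:ℂ) * Complex.I);
       (Real.sin x : ℂ) * Complex.I * Complex.exp ((φ:ℂ) * Complex.I),
       (Real.cos x : ℂ) * Complex.exp (-(φ:ℂ) * Complex.I)] := by
  ext i j
  fin_cases i <;> fin_cases j <;>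
    simp [Wgate, Zgate, Matrix.mul_apply, Fin.sum_univ_two]

lemma TP_WZ_entry (φ : ℝ) (i j : Fin 2) : TP 1 (fun x => (Wgate x * Zgate φ) i j) := by
  simp only [WZ_eq]
  fin_cases i <;> fin_cases j <;>
    simp only [Matrix.cons_val', Matrix.cons_val_zero, Matrix.cons_val_one,
      Matrix.head_cons, Matrix.head_fin_const, Matrix.empty_val', Matrix.cons_val_fin_one]
  · exact TP1_cos _
  · exact TP1_sinI _
  · exact TP1_sinI _
  · exact TP1_cos _

/-- The master lemma: if the last signal bit is 1 (an `x₁`-step), then the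
top `x₁`-coefficients of `P` and `Q` agree up to the phase `2 φ_d`. -/
lemma master (d : ℕ) (Φ : Fin (d + 1) → ℝ) (s : Fin d → ℕ) (hs : ∀ k, s k ≤ 1)
    (d₁ e : ℕ) (hd₁ : d₁ = ∑ k, s k) (hd₁pos : 1 ≤ d₁) (hd : 0 < d)
    (hlast : s ⟨d - 1, by omega⟩ = 1)
    (c ctil : ℤ → ℤ → ℂ)
    (hP : ∀ x₁ x₂ : ℝ,
      Mmqsp d Φ s x₁ x₂ 0 0 =
        ∑ j ∈ Finset.Icc (-(d₁ : ℤ)) (d₁ : ℤ),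
          ∑ k ∈ Finset.Icc (-(e : ℤ)) (e : ℤ), c j k * ec j x₁ * ec k x₂)
    (hQ : ∀ x₁ x₂ : ℝ,
      Mmqsp d Φ s x₁ x₂ 0 1 =
        ∑ j ∈ Finset.Icc (-(d₁ : ℤ)) (d₁ : ℤ),
          ∑ k ∈ Finset.Icc (-(e : ℤ)) (e : ℤ), ctil j k * ec j x₁ * ec k x₂) :
    ∃ φ : ℝ, ∀ k ∈ Finset.Icc (-(e : ℤ)) (e : ℤ),
      c (d₁ : ℤ) k = Complex.exp (2 * (φ : ℂ) * Complex.I) * ctil (d₁ : ℤ) k := by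
  obtain ⟨n, rfl⟩ : ∃ n, d = n + 1 := ⟨d - 1, by omega⟩
  have hlast' : s (Fin.last n) = 1 := hlast
  set φd : ℝ := Φ (Fin.last n).succ with hφd
  refine ⟨φd, ?_⟩
  -- the "front" product
  set L : ℝ → ℝ → Matrix (Fin 2) (Fin 2) ℂ := fun x₂ x₁ =>
    Zgate (Φ 0) * (List.ofFn (fun i : Fin n =>
      Wgate x₁ ^ s i.castSucc * Wgate x₂ ^ (1 - s i.castSucc)
        * Zgate (Φ i.castSucc.succ))).prod with hLdef
  have hM : ∀ x₁ x₂ : ℝ, Mmqsp (n+1) Φ s x₁ x₂ = L x₂ x₁ * (Wgate x₁ * Zgate φd) := by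
    intro x₁ x₂
    rw [Mmqsp, List.ofFn_succ' (fun k : Fin (n+1) =>
      Wgate x₁ ^ s k * Wgate x₂ ^ (1 - s k) * Zgate (Φ k.succ)), List.prod_concat]
    simp only [hlast', pow_one, pow_zero, mul_one, Nat.sub_self]
    rw [hLdef, ← mul_assoc]
  -- degree of the front product
  obtain ⟨mN, hmN⟩ : ∃ mN, d₁ = mN + 1 := ⟨d₁ - 1, by omega⟩
  have hsum : ∑ i : Fin n, s i.castSucc = mN := by
    have := Fin.sum_univ_castSucc (f := fun k : Fin (n+1) => s k)
    rw [hd₁, this, hlast'] at hmN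
    omega
  have hTP : ∀ x₂ : ℝ, ∀ i j, TP (mN : ℤ) (fun x₁ => L x₂ x₁ i j) := by
    intro x₂
    have := TP_list_prod ((fun _ : ℝ => Zgate (Φ 0), 0) ::
      List.ofFn (fun i : Fin n =>
        ((fun x₁ : ℝ => Wgate x₁ ^ s i.castSucc * Wgate x₂ ^ (1 - s i.castSucc)
          * Zgate (Φ i.castSucc.succ)), s i.castSucc)))
      (by
        intro p hp i j
        rcases List.mem_cons.mp hp with h | h
        · subst h
          exact TP_const _
        · obtain ⟨i', rfl⟩ := List.mem_ofFn.mp h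
          rcases Nat.le_one_iff_eq_zero_or_eq_one.mp (hs i'.castSucc) with h0 | h1
          · simp only [h0, pow_zero, one_mul, pow_one, Nat.sub_zero, Nat.cast_zero]
            exact TP_const _
          · simp only [h1, pow_one, pow_zero, mul_one, Nat.sub_self, Nat.cast_one]
            exact TP_WZ_entry _ i j)
    intro i j
    have heq : (fun x₁ : ℝ => L x₂ x₁ i j) = fun x₁ =>
        (((fun _ : ℝ => Zgate (Φ 0), 0) ::
          List.ofFn (fun i : Fin n =>
            ((fun x₁ : ℝ => Wgate x₁ ^ s i.castSucc * Wgate x₂ ^ (1 - s i.castSucc)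
              * Zgate (Φ i.castSucc.succ)), s i.castSucc))).map (fun p => p.1 x₁)).prod i j := by
      funext x₁
      rw [List.map_cons, List.map_ofFn, List.prod_cons, hLdef]
      rfl
    have hw : (((fun _ : ℝ => Zgate (Φ 0), (0:ℕ)) ::
        List.ofFn (fun i : Fin n =>
          ((fun x₁ : ℝ => Wgate x₁ ^ s i.castSucc * Wgate x₂ ^ (1 - s i.castSucc)
            * Zgate (Φ i.castSucc.succ)), s i.castSucc))).map Prod.snd).sum = mN := by
      rw [List.map_cons, List.map_ofFn, List.sum_cons]
      have : (List.ofFn (Prod.snd ∘ fun i : Fin n =>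
          ((fun x₁ : ℝ => Wgate x₁ ^ s i.castSucc * Wgate x₂ ^ (1 - s i.castSucc)
            * Zgate (Φ i.castSucc.succ)), s i.castSucc))).sum
          = ∑ i : Fin n, s i.castSucc := by
        rw [List.sum_ofFn]
        rfl
      rw [this, hsum, zero_add]
    rw [heq]
    have := this i j
    rwa [hw] at this
  -- the key pointwise identity for the top x₁-coefficients
  have hCC : ∀ x₂ : ℝ,
      ∑ k ∈ Finset.Icc (-(e : ℤ)) (e : ℤ), c (d₁ : ℤ) k * ec k x₂
        = Complex.exp (2 * (φd : ℂ) * Complex.I) *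
          ∑ k ∈ Finset.Icc (-(e : ℤ)) (e : ℤ), ctil (d₁ : ℤ) k * ec k x₂ := by
    intro x₂
    obtain ⟨a, ha0, ha⟩ := hTP x₂ 0 0
    obtain ⟨b, hb0, hb⟩ := hTP x₂ 0 1
    set m : ℤ := (mN : ℤ) with hm
    have hd₁m : (d₁ : ℤ) = m + 1 := by rw [hmN]; push_cast; ring
    have hmnn : (0:ℤ) ≤ m := by positivity
    -- entry formulas
    have hM00 : ∀ x₁ : ℝ, Mmqsp (n+1) Φ s x₁ x₂ 0 0 =
        ((∑ j ∈ Finset.Icc (-m) m, a j * ec j x₁) * (Real.cos x₁ : ℂ)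
          + (∑ j ∈ Finset.Icc (-m) m, b j * ec j x₁) * ((Real.sin x₁ : ℂ) * Complex.I))
          * Complex.exp ((φd:ℂ) * Complex.I) := by
      intro x₁
      rw [hM x₁ x₂, WZ_eq, ← ha x₁, ← hb x₁]
      simp [Matrix.mul_apply, Fin.sum_univ_two]
      ring
    have hM01 : ∀ x₁ : ℝ, Mmqsp (n+1) Φ s x₁ x₂ 0 1 =
        ((∑ j ∈ Finset.Icc (-m) m, b j * ec j x₁) * (Real.cos x₁ : ℂ)
          + (∑ j ∈ Finset.Icc (-m) m, a j * ec j x₁) * ((Real.sin x₁ : ℂ) * Complex.I))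
          * Complex.exp (-(φd:ℂ) * Complex.I) := by
      intro x₁
      rw [hM x₁ x₂, WZ_eq, ← ha x₁, ← hb x₁]
      simp [Matrix.mul_apply, Fin.sum_univ_two]
      ring
    -- top coefficient of P
    have topP : ∑ k ∈ Finset.Icc (-(e : ℤ)) (e : ℤ), c (d₁ : ℤ) k * ec k x₂
        = ((a m + b m)/2) * Complex.exp ((φd:ℂ) * Complex.I) := by
      have hzero : ∀ x₁ : ℝ, ∑ j ∈ Finset.Icc (-(m+1)) (m+1),
          ((∑ k ∈ Finset.Icc (-(e : ℤ)) (e : ℤ), c j k * ec k x₂)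
            - ((a (j-1) + a (j+1) + b (j-1) - b (j+1))/2)
              * Complex.exp ((φd:ℂ) * Complex.I)) * ec j x₁ = 0 := by
        intro x₁
        have e1 := hM00 x₁
        rw [expand_cos_sin m hmnn a b ha0 hb0 x₁, hP x₁ x₂] at e1
        rw [hd₁m] at e1
        have e2 : ∑ j ∈ Finset.Icc (-(m+1)) (m+1),
            (∑ k ∈ Finset.Icc (-(e : ℤ)) (e : ℤ), c j k * ec k x₂) * ec j x₁
            = ∑ j ∈ Finset.Icc (-(m+1)) (m+1),
              ((a (j-1) + a (j+1) + b (j-1) - b (j+1))/2)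
                * Complex.exp ((φd:ℂ) * Complex.I) * ec j x₁ := by
          calc ∑ j ∈ Finset.Icc (-(m+1)) (m+1),
              (∑ k ∈ Finset.Icc (-(e : ℤ)) (e : ℤ), c j k * ec k x₂) * ec j x₁
              = ∑ j ∈ Finset.Icc (-(m+1)) (m+1),
                ∑ k ∈ Finset.Icc (-(e : ℤ)) (e : ℤ), c j k * ec j x₁ * ec k x₂ := by
                apply Finset.sum_congr rfl
                intro j _
                rw [Finset.sum_mul]
                exact Finset.sum_congr rfl fun k _ => by ring
            _ = (∑ j ∈ Finset.Icc (-(m+1)) (m+1),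
                  ((a (j-1) + a (j+1) + b (j-1) - b (j+1))/2) * ec j x₁)
                  * Complex.exp ((φd:ℂ) * Complex.I) := e1
            _ = ∑ j ∈ Finset.Icc (-(m+1)) (m+1),
                  ((a (j-1) + a (j+1) + b (j-1) - b (j+1))/2)
                    * Complex.exp ((φd:ℂ) * Complex.I) * ec j x₁ := by
                rw [Finset.sum_mul]
                exact Finset.sum_congr rfl fun j _ => by ring
        rw [Finset.sum_congr rfl (fun j _ => sub_mul _ _ _), Finset.sum_sub_distrib, e2,
          sub_self]
      have := exp_sum_eq_zero _ _ hzero (m+1) (by simp [Finset.mem_Icc]; omega)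
      have hz : a (m+1+1) = 0 := ha0 _ (by simp [Finset.mem_Icc])
      have hz' : b (m+1+1) = 0 := hb0 _ (by simp [Finset.mem_Icc])
      rw [sub_eq_zero] at this
      rw [hd₁m]
      rw [this]
      have h1 : m + 1 - 1 = m := by ring
      rw [h1, hz, hz']
      ring_nf
    -- top coefficient of Q
    have topQ : ∑ k ∈ Finset.Icc (-(e : ℤ)) (e : ℤ), ctil (d₁ : ℤ) k * ec k x₂
        = ((a m + b m)/2) * Complex.exp (-(φd:ℂ) * Complex.I) := by
      have hzero : ∀ x₁ : ℝ, ∑ j ∈ Finset.Icc (-(m+1)) (m+1),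
          ((∑ k ∈ Finset.Icc (-(e : ℤ)) (e : ℤ), ctil j k * ec k x₂)
            - ((b (j-1) + b (j+1) + a (j-1) - a (j+1))/2)
              * Complex.exp (-(φd:ℂ) * Complex.I)) * ec j x₁ = 0 := by
        intro x₁
        have e1 := hM01 x₁
        rw [expand_cos_sin m hmnn b a hb0 ha0 x₁, hQ x₁ x₂] at e1
        rw [hd₁m] at e1
        have e2 : ∑ j ∈ Finset.Icc (-(m+1)) (m+1),
            (∑ k ∈ Finset.Icc (-(e : ℤ)) (e : ℤ), ctil j k * ec k x₂) * ec j x₁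
            = ∑ j ∈ Finset.Icc (-(m+1)) (m+1),
              ((b (j-1) + b (j+1) + a (j-1) - a (j+1))/2)
                * Complex.exp (-(φd:ℂ) * Complex.I) * ec j x₁ := by
          calc ∑ j ∈ Finset.Icc (-(m+1)) (m+1),
              (∑ k ∈ Finset.Icc (-(e : ℤ)) (e : ℤ), ctil j k * ec k x₂) * ec j x₁
              = ∑ j ∈ Finset.Icc (-(m+1)) (m+1),
                ∑ k ∈ Finset.Icc (-(e : ℤ)) (e : ℤ), ctil j k * ec j x₁ * ec k x₂ := by
                apply Finset.sum_congr rfl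
                intro j _
                rw [Finset.sum_mul]
                exact Finset.sum_congr rfl fun k _ => by ring
            _ = (∑ j ∈ Finset.Icc (-(m+1)) (m+1),
                  ((b (j-1) + b (j+1) + a (j-1) - a (j+1))/2) * ec j x₁)
                  * Complex.exp (-(φd:ℂ) * Complex.I) := e1
            _ = ∑ j ∈ Finset.Icc (-(m+1)) (m+1),
                  ((b (j-1) + b (j+1) + a (j-1) - a (j+1))/2)
                    * Complex.exp (-(φd:ℂ) * Complex.I) * ec j x₁ := by
                rw [Finset.sum_mul]
                exact Finset.sum_congr rfl fun j _ => by ring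
        rw [Finset.sum_congr rfl (fun j _ => sub_mul _ _ _), Finset.sum_sub_distrib, e2,
          sub_self]
      have := exp_sum_eq_zero _ _ hzero (m+1) (by simp [Finset.mem_Icc]; omega)
      have hz : a (m+1+1) = 0 := ha0 _ (by simp [Finset.mem_Icc])
      have hz' : b (m+1+1) = 0 := hb0 _ (by simp [Finset.mem_Icc])
      rw [sub_eq_zero] at this
      rw [hd₁m]
      rw [this]
      have h1 : m + 1 - 1 = m := by ring
      rw [h1, hz, hz']
      ring_nf
    rw [topP, topQ]
    rw [show Complex.exp (2 * (φd:ℂ) * Complex.I) * ((a m + b m)/2 * Complex.exp (-(φd:ℂ) * Complex.I))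
        = (a m + b m)/2 * (Complex.exp (2 * (φd:ℂ) * Complex.I) * Complex.exp (-(φd:ℂ) * Complex.I)) by ring,
      ← Complex.exp_add]
    rw [show 2 * (φd:ℂ) * Complex.I + -(φd:ℂ) * Complex.I = (φd:ℂ) * Complex.I by ring]
  -- conclude coefficientwise
  have final := exp_sum_eq_zero (Finset.Icc (-(e : ℤ)) (e : ℤ))
    (fun k => c (d₁ : ℤ) k - Complex.exp (2 * (φd : ℂ) * Complex.I) * ctil (d₁ : ℤ) k)
    (by
      intro x₂
      have := hCC x₂
      rw [Finset.sum_congr rfl (fun k _ => sub_mul _ _ _), Finset.sum_sub_distrib, this,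
        Finset.mul_sum]
      rw [sub_eq_zero]
      exact Finset.sum_congr rfl fun k _ => by ring)
  intro k hk
  have := final k hk
  rwa [sub_eq_zero] at this

lemma Mmqsp_swap (d : ℕ) (Φ : Fin (d + 1) → ℝ) (s : Fin d → ℕ) (hs : ∀ k, s k ≤ 1)
    (x₁ x₂ : ℝ) :
    Mmqsp d Φ (fun k => 1 - s k) x₂ x₁ = Mmqsp d Φ s x₁ x₂ := by
  rw [Mmqsp, Mmqsp]
  congr 1
  congr 1
  have : (fun k : Fin d => Wgate x₂ ^ (1 - s k) * Wgate x₁ ^ (1 - (1 - s k)) * Zgate (Φ k.succ))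
      = fun k => Wgate x₁ ^ s k * Wgate x₂ ^ (1 - s k) * Zgate (Φ k.succ) := by
    funext k
    rcases Nat.le_one_iff_eq_zero_or_eq_one.mp (hs k) with h0 | h1
    · simp [h0]
    · simp [h1]
  rw [this]

theorem mqsp_top_coefficient_condition (d : ℕ) (Φ : Fin (d + 1) → ℝ)
    (s : Fin d → ℕ) (hs : ∀ k, s k ≤ 1)
    (d₁ d₂ : ℕ) (hd₁ : d₁ = ∑ k, s k) (hd₂ : d₂ = d - d₁)
    (hd₁pos : 1 ≤ d₁) (hd₂pos : 1 ≤ d₂)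
    (c ctil : ℤ → ℤ → ℂ)
    (hP : ∀ x₁ x₂ : ℝ,
      Mmqsp d Φ s x₁ x₂ 0 0 =
        ∑ j ∈ Finset.Icc (-(d₁ : ℤ)) (d₁ : ℤ),
          ∑ k ∈ Finset.Icc (-(d₂ : ℤ)) (d₂ : ℤ),
            c j k * Complex.exp (Complex.I * (j : ℂ) * (x₁ : ℂ)) *
              Complex.exp (Complex.I * (k : ℂ) * (x₂ : ℂ)))
    (hQ : ∀ x₁ x₂ : ℝ,
      Mmqsp d Φ s x₁ x₂ 0 1 =
        ∑ j ∈ Finset.Icc (-(d₁ : ℤ)) (d₁ : ℤ),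
          ∑ k ∈ Finset.Icc (-(d₂ : ℤ)) (d₂ : ℤ),
            ctil j k * Complex.exp (Complex.I * (j : ℂ) * (x₁ : ℂ)) *
              Complex.exp (Complex.I * (k : ℂ) * (x₂ : ℂ))) :
    (∃ φ : ℝ, ∀ k ∈ Finset.Icc (-(d₂ : ℤ)) (d₂ : ℤ),
        c (d₁ : ℤ) k = Complex.exp (2 * (φ : ℂ) * Complex.I) * ctil (d₁ : ℤ) k) ∨
    (∃ φ' : ℝ, ∀ j ∈ Finset.Icc (-(d₁ : ℤ)) (d₁ : ℤ),
        c j (d₂ : ℤ) = Complex.exp (2 * (φ' : ℂ) * Complex.I) * ctil j (d₂ : ℤ)) := by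
  have hd₁le : d₁ ≤ d := by
    have h1 : ∑ k, s k ≤ ∑ _k : Fin d, 1 := Finset.sum_le_sum fun k _ => hs k
    simp only [Finset.sum_const, Finset.card_univ, Fintype.card_fin, smul_eq_mul,
      mul_one] at h1
    omega
  have hdpos : 0 < d := by omega
  rcases Nat.le_one_iff_eq_zero_or_eq_one.mp (hs ⟨d - 1, by omega⟩) with h0 | h1
  · -- last step is an x₂-step: right alternative
    right
    have hsum' : d₂ = ∑ k, (1 - s k) := by
      have key : ∑ k, (1 - s k) + ∑ k, s k = d := by
        rw [← Finset.sum_add_distrib]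
        have : ∀ k : Fin d, (1 - s k) + s k = 1 := fun k => by have := hs k; omega
        rw [Finset.sum_congr rfl fun k _ => this k]
        simp
      omega
    have hlast' : (fun k => 1 - s k) ⟨d - 1, by omega⟩ = 1 := by simp [h0]
    have hP' : ∀ y₁ y₂ : ℝ,
        Mmqsp d Φ (fun k => 1 - s k) y₁ y₂ 0 0 =
          ∑ j ∈ Finset.Icc (-(d₂ : ℤ)) (d₂ : ℤ),
            ∑ k ∈ Finset.Icc (-(d₁ : ℤ)) (d₁ : ℤ),
              c k j * ec j y₁ * ec k y₂ := by
      intro y₁ y₂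
      rw [Mmqsp_swap d Φ s hs y₂ y₁, hP y₂ y₁, Finset.sum_comm]
      exact Finset.sum_congr rfl fun k _ => Finset.sum_congr rfl fun j _ => by
        simp only [ec]; ring
    have hQ' : ∀ y₁ y₂ : ℝ,
        Mmqsp d Φ (fun k => 1 - s k) y₁ y₂ 0 1 =
          ∑ j ∈ Finset.Icc (-(d₂ : ℤ)) (d₂ : ℤ),
            ∑ k ∈ Finset.Icc (-(d₁ : ℤ)) (d₁ : ℤ),
              ctil k j * ec j y₁ * ec k y₂ := by
      intro y₁ y₂
      rw [Mmqsp_swap d Φ s hs y₂ y₁, hQ y₂ y₁, Finset.sum_comm]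
      exact Finset.sum_congr rfl fun k _ => Finset.sum_congr rfl fun j _ => by
        simp only [ec]; ring
    obtain ⟨φ, hφ⟩ := master d Φ (fun k => 1 - s k) (fun k => by show 1 - s k ≤ 1; omega) d₂ d₁
      hsum' hd₂pos hdpos hlast' (fun j k => c k j) (fun j k => ctil k j) hP' hQ'
    exact ⟨φ, hφ⟩
  · -- last step is an x₁-step: left alternative
    left
    have hP' : ∀ x₁ x₂ : ℝ,
        Mmqsp d Φ s x₁ x₂ 0 0 =
          ∑ j ∈ Finset.Icc (-(d₁ : ℤ)) (d₁ : ℤ),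
            ∑ k ∈ Finset.Icc (-(d₂ : ℤ)) (d₂ : ℤ),
              c j k * ec j x₁ * ec k x₂ := by
      intro x₁ x₂
      rw [hP x₁ x₂]
      rfl
    have hQ' : ∀ x₁ x₂ : ℝ,
        Mmqsp d Φ s x₁ x₂ 0 1 =
          ∑ j ∈ Finset.Icc (-(d₁ : ℤ)) (d₁ : ℤ),
            ∑ k ∈ Finset.Icc (-(d₂ : ℤ)) (d₂ : ℤ),
              ctil j k * ec j x₁ * ec k x₂ := by
      intro x₁ x₂
      rw [hQ x₁ x₂]
      rfl
    exact master d Φ s hs d₁ d₂ hd₁ hd₁pos hdpos h1 c ctil hP' hQ'
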